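/- In the setting of the two key approximation lemmas (uniform norm bound K for Δ and all Δᵢ; convergence of traces of polynomials), suppose additionally that ln Det_{πᵢ}(Δᵢ) ≥ 0 for all i, where F_{Δᵢ}(K) = d. Then limᵢ F_{Δᵢ}(0) = F_Δ(0) and ln Det_π(Δ) ≥ limsupᵢ ln Det_{πᵢ}(Δᵢ) ≥ 0; in particular Δ is of determinant class. -/

import Mathlib

open MeasureTheory Filter Set

/-- Spectral density function `F_Δ(lam) = μ([0, lam])`. -/
noncomputable def sdf (μ : Measure ℝ) (lam : ℝ) : ℝ := (μ (Icc 0 lam)).toReal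

set_option linter.unusedSectionVars false

namespace Stmt12Aux

variable {ν : Measure ℝ} [IsFiniteMeasure ν] {K' : ℝ}

lemma ae_mem (hK : ν (Icc 0 K')ᶜ = 0) : ∀ᵐ x ∂ν, x ∈ Icc 0 K' := by
  rw [MeasureTheory.ae_iff]
  rw [show {a | ¬ a ∈ Icc 0 K'} = (Icc 0 K')ᶜ from rfl, hK]

lemma restrict_eq (hK : ν (Icc 0 K')ᶜ = 0) : ν.restrict (Icc 0 K') = ν :=
  Measure.restrict_eq_self_of_ae_mem (ae_mem hK)

lemma integrable_cont (hK : ν (Icc 0 K')ᶜ = 0) {f : ℝ → ℝ} (hf : Continuous f) :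
    Integrable f ν := by
  rw [← restrict_eq hK]
  exact hf.continuousOn.integrableOn_compact isCompact_Icc

lemma meas_univ (hK : ν (Icc 0 K')ᶜ = 0) : ν (Icc 0 K') = ν univ := by
  have h := measure_add_measure_compl (μ := ν) (measurableSet_Icc (a := (0:ℝ)) (b := K'))
  rw [hK, add_zero] at h; exact h

/-- bound for set integrals of functions bounded on the support -/
lemma setIntegral_le (hK : ν (Icc 0 K')ᶜ = 0) {s : Set ℝ} (hsm : MeasurableSet s)
    {f : ℝ → ℝ} (hfi : IntegrableOn f s ν) {C : ℝ} (hC0 : 0 ≤ C)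
    (hC : ∀ x ∈ s ∩ Icc 0 K', f x ≤ C) :
    ∫ x in s, f x ∂ν ≤ C * (ν univ).toReal := by
  have hsub : s =ᵐ[ν] (s ∩ Icc 0 K' : Set ℝ) := by
    apply MeasureTheory.ae_eq_set.2
    constructor
    · exact measure_mono_null (fun x hx h => hx.2 ⟨hx.1, h⟩) hK
    · have : (s ∩ Icc 0 K') \ s = (∅ : Set ℝ) := by
        ext x; simp (config := {contextual := true}) [Set.mem_diff]
      rw [this, measure_empty]
  have hfi' : IntegrableOn f (s ∩ Icc 0 K') ν := hfi.mono_set inter_subset_left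
  rw [setIntegral_congr_set hsub]
  have h1 : ∫ x in s ∩ Icc 0 K', f x ∂ν ≤ ∫ _x in s ∩ Icc 0 K', C ∂ν :=
    setIntegral_mono_on hfi' (integrableOn_const (measure_ne_top _ _))
      (hsm.inter measurableSet_Icc) hC
  rw [setIntegral_const, smul_eq_mul] at h1
  refine h1.trans ?_
  rw [mul_comm]
  exact mul_le_mul_of_nonneg_left
    (ENNReal.toReal_mono (measure_ne_top _ _) (measure_mono (subset_univ _))) hC0

lemma nullIio (hK : ν (Icc 0 K')ᶜ = 0) : ν (Iio 0) = 0 := by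
  apply measure_mono_null _ hK
  intro x hx h
  exact absurd h.1 (not_le.2 hx)

lemma restrict_compl_singleton (hK : ν (Icc 0 K')ᶜ = 0) :
    ν.restrict ({0}ᶜ) = ν.restrict (Ioi 0) := by
  apply Measure.restrict_congr_set
  apply MeasureTheory.ae_eq_set.2
  constructor
  · apply measure_mono_null _ (nullIio hK)
    intro x hx
    rcases lt_trichotomy x 0 with h|h|h
    · exact h
    · exact absurd h hx.1
    · exact absurd h hx.2
  · have : (Ioi 0 \ {0}ᶜ : Set ℝ) = ∅ := by
      ext x; simp (config := {contextual := true}) [ne_of_gt]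
    rw [this, measure_empty]

/-- split the integral into the atom at 0 and the positive part -/
lemma split (hK : ν (Icc 0 K')ᶜ = 0) {h : ℝ → ℝ} (hh : Integrable h ν) :
    ∫ x, h x ∂ν = h 0 * (ν {0}).toReal + ∫ x in Ioi 0, h x ∂ν := by
  rw [← integral_add_compl (measurableSet_singleton (0:ℝ)) hh,
    restrict_compl_singleton hK, integral_singleton, smul_eq_mul, mul_comm]
  rfl

lemma abs_integral_sub_le (hK : ν (Icc 0 K')ᶜ = 0) {d : ℕ} (hνd : (ν univ).toReal = d)
    {f g : ℝ → ℝ} (hf : Continuous f) (hg : Continuous g) {ε' : ℝ} (hε' : 0 ≤ ε')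
    (hfg : ∀ x ∈ Icc 0 K', |f x - g x| ≤ ε') :
    |∫ x, f x ∂ν - ∫ x, g x ∂ν| ≤ ε' * d := by
  rw [← integral_sub (integrable_cont hK hf) (integrable_cont hK hg)]
  rw [← Real.norm_eq_abs]
  refine (norm_integral_le_integral_norm _).trans ?_
  simp only [Real.norm_eq_abs]
  rw [← setIntegral_univ, ← hνd]
  exact setIntegral_le hK MeasurableSet.univ
    ((integrable_cont hK (hf.sub hg)).abs.integrableOn) hε'
    (fun x hx => hfg x hx.2)

lemma tendsto_integral_of_moments {ι : Type*} [Preorder ι] [Nonempty ι]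
    [IsDirected ι (· ≤ ·)] (d : ℕ) (K' : ℝ) (μ : Measure ℝ) (μi : ι → Measure ℝ)
    [IsFiniteMeasure μ] [∀ i, IsFiniteMeasure (μi i)]
    (hs : μ (Icc 0 K')ᶜ = 0) (hsi : ∀ i, (μi i) (Icc 0 K')ᶜ = 0)
    (hd : (μ Set.univ).toReal = d) (hdi : ∀ i, ((μi i) Set.univ).toReal = d)
    (hmom : ∀ p : Polynomial ℝ,
      Tendsto (fun i => ∫ x, p.eval x ∂(μi i)) atTop (nhds (∫ x, p.eval x ∂μ)))
    {f : ℝ → ℝ} (hf : Continuous f) :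
    Tendsto (fun i => ∫ x, f x ∂(μi i)) atTop (nhds (∫ x, f x ∂μ)) := by
  rw [Metric.tendsto_nhds]
  intro ε hε
  set ε' := ε / (2 * d + 3) with hε'def
  have hε' : 0 < ε' := by positivity
  obtain ⟨p, hp⟩ := exists_polynomial_near_of_continuousOn 0 K' f hf.continuousOn ε' hε'
  have hp' : ∀ x ∈ Icc 0 K', |f x - p.eval x| ≤ ε' := by
    intro x hx
    rw [abs_sub_comm]
    exact (hp x hx).le
  have h1 : |∫ x, f x ∂μ - ∫ x, p.eval x ∂μ| ≤ ε' * d :=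
    abs_integral_sub_le hs hd hf p.continuous hε'.le hp'
  have h2 : ∀ i, |∫ x, f x ∂(μi i) - ∫ x, p.eval x ∂(μi i)| ≤ ε' * d := fun i =>
    abs_integral_sub_le (hsi i) (hdi i) hf p.continuous hε'.le hp'
  have h3 := (Metric.tendsto_nhds.1 (hmom p)) ε' hε'
  filter_upwards [h3] with i hi
  rw [Real.dist_eq] at hi ⊢
  have : |∫ x, f x ∂(μi i) - ∫ x, f x ∂μ| ≤
      |∫ x, f x ∂(μi i) - ∫ x, p.eval x ∂(μi i)| +
      |∫ x, p.eval x ∂(μi i) - ∫ x, p.eval x ∂μ| +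
      |∫ x, p.eval x ∂μ - ∫ x, f x ∂μ| := by
    have := abs_sub_le (∫ x, f x ∂(μi i)) (∫ x, p.eval x ∂(μi i)) (∫ x, f x ∂μ)
    have := abs_sub_le (∫ x, p.eval x ∂(μi i)) (∫ x, p.eval x ∂μ) (∫ x, f x ∂μ)
    linarith
  rw [abs_sub_comm] at h1
  have hεeq : ε = ε' * (2 * d + 3) := by
    rw [hε'def]; field_simp
  calc |∫ x, f x ∂(μi i) - ∫ x, f x ∂μ| ≤ ε' * d + ε' + ε' * d := by linarith [h2 i]
    _ < ε := by rw [hεeq]; nlinarith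

end Stmt12Aux

open Stmt12Aux in
/-- In the approximation setting (uniform norm bound `K`, spectral measures of total
mass `d` supported in `[0,K]`, convergence of traces of polynomials), suppose
additionally that `ln Det_{πᵢ}(Δᵢ) = ∫_{0⁺}^∞ ln(lam) dF_{Δᵢ}(lam) ≥ 0` (in particular
the integral converges) for all `i`.  Then `limᵢ F_{Δᵢ}(0) = F_Δ(0)`, `Δ` is of
determinant class, and `ln Det_π(Δ) ≥ limsupᵢ ln Det_{πᵢ}(Δᵢ) ≥ 0`. -/
theorem stmt_12 {ι : Type*} [Preorder ι] [Nonempty ι] [IsDirected ι (· ≤ ·)]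
    (d : ℕ) (K : ℝ)
    (μ : Measure ℝ) (μi : ι → Measure ℝ)
    [IsFiniteMeasure μ] [∀ i, IsFiniteMeasure (μi i)]
    (hs : μ (Icc 0 K)ᶜ = 0) (hsi : ∀ i, (μi i) (Icc 0 K)ᶜ = 0)
    (hd : (μ Set.univ).toReal = d) (hdi : ∀ i, ((μi i) Set.univ).toReal = d)
    (hmom : ∀ p : Polynomial ℝ,
      Tendsto (fun i => ∫ x, p.eval x ∂(μi i)) atTop (nhds (∫ x, p.eval x ∂μ)))
    (hdeti : ∀ i, IntegrableOn Real.log (Ioi 0) (μi i) ∧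
      0 ≤ ∫ x in Ioi (0 : ℝ), Real.log x ∂(μi i)) :
    Tendsto (fun i => sdf (μi i) 0) atTop (nhds (sdf μ 0)) ∧
    IntegrableOn Real.log (Ioi 0) μ ∧
    0 ≤ limsup (fun i => ∫ x in Ioi (0 : ℝ), Real.log x ∂(μi i)) atTop ∧
    limsup (fun i => ∫ x in Ioi (0 : ℝ), Real.log x ∂(μi i)) atTop ≤
      ∫ x in Ioi (0 : ℝ), Real.log x ∂μ := by
  classical
  have hNB : (atTop : Filter ι).NeBot := atTop_neBot_iff.2 ⟨‹_›, ‹_›⟩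
  set K' := max K 1 with hK'def
  have hK'1 : (1:ℝ) ≤ K' := le_max_right _ _
  have hK'0 : (0:ℝ) < K' := lt_of_lt_of_le one_pos hK'1
  have hsub : Icc (0:ℝ) K ⊆ Icc 0 K' := Icc_subset_Icc le_rfl (le_max_left _ _)
  have hs' : μ (Icc 0 K')ᶜ = 0 := measure_mono_null (compl_subset_compl.2 hsub) hs
  have hsi' : ∀ i, (μi i) (Icc 0 K')ᶜ = 0 := fun i =>
    measure_mono_null (compl_subset_compl.2 hsub) (hsi i)
  set M := Real.log K' with hMdef
  have hM0 : 0 ≤ M := Real.log_nonneg hK'1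
  set g : ℝ → ℝ → ℝ := fun ε x => Real.log (max x ε) with hgdef
  have hgc : ∀ ε : ℝ, 0 < ε → Continuous (g ε) := by
    intro ε hε
    apply (continuous_id.max continuous_const).log
    intro x
    exact ne_of_gt (lt_of_lt_of_le hε (le_max_right x ε))
  have hgle : ∀ ε ∈ Ioc (0:ℝ) 1, ∀ x ∈ Icc (0:ℝ) K', g ε x ≤ M := by
    intro ε hε x hx
    apply Real.log_le_log (lt_of_lt_of_le hε.1 (le_max_right x ε))
    exact max_le hx.2 (hε.2.trans hK'1)
  have hglog : ∀ (ε : ℝ), ∀ x ∈ Ioi (0:ℝ), Real.log x ≤ g ε x := by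
    intro ε x hx
    exact Real.log_le_log hx (le_max_left x ε)
  have hW : ∀ f : ℝ → ℝ, Continuous f →
      Tendsto (fun i => ∫ x, f x ∂(μi i)) atTop (nhds (∫ x, f x ∂μ)) := fun f hf =>
    tendsto_integral_of_moments d K' μ μi hs' hsi' hd hdi hmom hf
  have hgInt : ∀ i, ∀ ε : ℝ, 0 < ε → IntegrableOn (g ε) (Ioi 0) (μi i) := fun i ε hε =>
    (integrable_cont (hsi' i) (hgc ε hε)).integrableOn
  -- uniform bound on ∫ (g ε - log) over (0,∞) for μi
  have hA : ∀ i, ∀ ε ∈ Ioc (0:ℝ) 1,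
      ∫ x in Ioi (0:ℝ), (g ε x - Real.log x) ∂(μi i) ≤ M * d := by
    intro i ε hε
    rw [integral_sub (hgInt i ε hε.1) (hdeti i).1]
    have h2 : ∫ x in Ioi (0:ℝ), g ε x ∂(μi i) ≤ M * ((μi i) univ).toReal :=
      setIntegral_le (hsi' i) measurableSet_Ioi (hgInt i ε hε.1) hM0
        (fun x hx => hgle ε hε x hx.2)
    rw [hdi i] at h2
    linarith [(hdeti i).2]
  -- small-interval mass bound
  have hsmall : ∀ i, ∀ a : ℝ, 0 < a → a < 1 →
      ((μi i) (Ioc 0 a)).toReal * (-Real.log a) ≤ M * d := by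
    intro i a ha0 ha1
    have hint1 : IntegrableOn (fun x => g 1 x - Real.log x) (Ioi 0) (μi i) :=
      (hgInt i 1 one_pos).sub (hdeti i).1
    have hnn : 0 ≤ᵐ[(μi i).restrict (Ioi 0)] fun x => g 1 x - Real.log x :=
      (ae_restrict_iff' measurableSet_Ioi).2
        (ae_of_all _ fun x hx => sub_nonneg.2 (hglog 1 x hx))
    have hs1 : ∫ x in Ioc (0:ℝ) a, (g 1 x - Real.log x) ∂(μi i) ≤
        ∫ x in Ioi (0:ℝ), (g 1 x - Real.log x) ∂(μi i) :=
      setIntegral_mono_set hint1 hnn (HasSubset.Subset.eventuallyLE Ioc_subset_Ioi_self)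
    have hs2 : ∫ _x in Ioc (0:ℝ) a, (-Real.log a) ∂(μi i) ≤
        ∫ x in Ioc (0:ℝ) a, (g 1 x - Real.log x) ∂(μi i) := by
      apply setIntegral_mono_on (integrableOn_const (measure_ne_top _ _))
        (hint1.mono_set Ioc_subset_Ioi_self) measurableSet_Ioc
      intro x hx
      have hg1 : g 1 x = 0 := by
        have : max x 1 = 1 := max_eq_right (hx.2.trans ha1.le)
        simp only [hgdef, this, Real.log_one]
      have := Real.log_le_log hx.1 hx.2
      rw [hg1]
      linarith
    rw [setIntegral_const, smul_eq_mul] at hs2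
    exact hs2.trans (hs1.trans (hA i 1 ⟨one_pos, le_refl 1⟩))
  -- convergence of atoms at 0
  -- nonnegative bump f x = max 0 (1 - x/δ) facts
  have hbump_lb : ∀ (ν : Measure ℝ), ∀ [IsFiniteMeasure ν], ν (Icc 0 K')ᶜ = 0 → ∀ δ : ℝ, 0 < δ →
      (ν {0}).toReal ≤ ∫ x, max 0 (1 - x/δ) ∂ν := by
    intro ν _ hν δ hδ
    have hint : Integrable (fun x => max 0 (1 - x/δ)) ν :=
      integrable_cont hν (continuous_const.max (continuous_const.sub (continuous_id.div_const δ)))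
    have h1 : ∫ x in ({0} : Set ℝ), max 0 (1 - x/δ) ∂ν ≤ ∫ x, max 0 (1 - x/δ) ∂ν :=
      setIntegral_le_integral hint (ae_of_all _ fun x => le_max_left 0 _)
    have h2 : ∫ x in ({0} : Set ℝ), max 0 (1 - x/δ) ∂ν = (ν {0}).toReal := by
      rw [Measure.restrict_singleton, integral_smul_measure, integral_dirac]
      simp
    rw [h2] at h1
    exact h1
  have hbump_ub : ∀ (ν : Measure ℝ), ∀ [IsFiniteMeasure ν], ν (Icc 0 K')ᶜ = 0 → ∀ δ : ℝ, 0 < δ →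
      ∫ x, max 0 (1 - x/δ) ∂ν ≤ (ν (Icc 0 δ)).toReal := by
    intro ν _ hν δ hδ
    have hint : Integrable (fun x => max 0 (1 - x/δ)) ν :=
      integrable_cont hν (continuous_const.max (continuous_const.sub (continuous_id.div_const δ)))
    rw [← integral_add_compl (measurableSet_Icc (a := (0:ℝ)) (b := δ)) hint]
    have hz : ∫ x in (Icc (0:ℝ) δ)ᶜ, max 0 (1 - x/δ) ∂ν = 0 := by
      apply integral_eq_zero_of_ae
      filter_upwards [ae_restrict_mem measurableSet_Icc.compl,
        ae_restrict_of_ae (ae_mem hν)] with x hx hx'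
      have hxδ : δ < x := by
        by_contra hcon
        exact hx ⟨hx'.1, not_lt.1 hcon⟩
      have : 1 - x/δ ≤ 0 := by
        have : 1 < x / δ := (one_lt_div hδ).2 hxδ
        linarith
      rw [max_eq_left this]
      rfl
    have hone : ∫ x in Icc (0:ℝ) δ, max 0 (1 - x/δ) ∂ν ≤ (ν (Icc 0 δ)).toReal := by
      have := setIntegral_mono_on hint.integrableOn
        (integrableOn_const (C := (1:ℝ)) (measure_ne_top ν _))
        (measurableSet_Icc (a := (0:ℝ)) (b := δ))
        (fun x hx => by
          apply max_le zero_le_one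
          have : 0 ≤ x / δ := div_nonneg hx.1 hδ.le
          linarith)
      rwa [setIntegral_const, smul_eq_mul, mul_one] at this
    rw [hz, add_zero]
    exact hone
  have hC : Tendsto (fun i => ((μi i) {0}).toReal) atTop (nhds ((μ {0}).toReal)) := by
    rw [Metric.tendsto_nhds]
    intro ε hε
    -- choose δ₁ by continuity from above
    have hiInter : Tendsto (fun n : ℕ => μ (Icc 0 (1/(n+1)))) atTop
        (nhds (μ (⋂ n : ℕ, Icc (0:ℝ) (1/(n+1))))) := by
      apply tendsto_measure_iInter_atTop
        (fun n => measurableSet_Icc.nullMeasurableSet)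
      · intro m n hmn
        apply Icc_subset_Icc le_rfl
        gcongr
      · exact ⟨0, measure_ne_top _ _⟩
    have hInterEq : (⋂ n : ℕ, Icc (0:ℝ) (1/(n+1))) = {0} := by
      apply Subset.antisymm
      · intro x hx
        simp only [mem_iInter, mem_Icc] at hx
        have hx0 : 0 ≤ x := (hx 0).1
        rcases eq_or_lt_of_le hx0 with h'|h'
        · simp [← h']
        · obtain ⟨n, hn⟩ := exists_nat_one_div_lt h'
          exact absurd ((hx n).2) (not_le.2 hn)
      · intro x hx
        simp only [mem_singleton_iff] at hx
        subst hx
        simp only [mem_iInter, mem_Icc]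
        exact fun n => ⟨le_rfl, by positivity⟩
    rw [hInterEq] at hiInter
    have hiInter' : Tendsto (fun n : ℕ => (μ (Icc 0 (1/(n+1)))).toReal) atTop
        (nhds ((μ {0}).toReal)) :=
      (ENNReal.tendsto_toReal (measure_ne_top μ {0})).comp hiInter
    have h4 : (0:ℝ) < ε/4 := by linarith
    obtain ⟨n₀, hn₀⟩ := (Metric.tendsto_atTop.1 hiInter' (ε/4) h4).imp (fun n hn => hn n le_rfl)
    set δ₁ : ℝ := 1/((n₀:ℝ)+1) with hδ₁def
    have hδ₁0 : 0 < δ₁ := by positivity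
    have hμδ₁ : (μ (Icc 0 δ₁)).toReal < (μ {0}).toReal + ε/4 := by
      rw [Real.dist_eq, abs_lt] at hn₀
      push_cast at hn₀ ⊢
      linarith [hn₀.2]
    -- choose δ₂ for the uniform small mass
    set c : ℝ := (M * d) * (4/ε) + 1 with hcdef
    have hc0 : 0 < c := by
      rw [hcdef]
      positivity
    set δ₂ : ℝ := Real.exp (-c) with hδ₂def
    have hδ₂0 : 0 < δ₂ := Real.exp_pos _
    have hδ₂1 : δ₂ < 1 := Real.exp_lt_one_iff.2 (by linarith)
    set δ : ℝ := min δ₁ δ₂ with hδdef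
    have hδ0 : 0 < δ := lt_min hδ₁0 hδ₂0
    have hδ1 : δ < 1 := lt_of_le_of_lt (min_le_right _ _) hδ₂1
    have hlogδ : c ≤ -Real.log δ := by
      have h1 : Real.log δ ≤ Real.log δ₂ := Real.log_le_log hδ0 (min_le_right _ _)
      have h2 : Real.log δ₂ = -c := Real.log_exp _
      linarith
    have hεc : ε/4 * c = M * d + ε/4 := by
      rw [hcdef]
      field_simp
    have hmass : ∀ i, ((μi i) (Ioc 0 δ)).toReal < ε/4 := by
      intro i
      have h1 := hsmall i δ hδ0 hδ1
      have h2 : ((μi i) (Ioc 0 δ)).toReal * c ≤ M * d := by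
        calc ((μi i) (Ioc 0 δ)).toReal * c ≤ ((μi i) (Ioc 0 δ)).toReal * (-Real.log δ) := by
              exact mul_le_mul_of_nonneg_left hlogδ ENNReal.toReal_nonneg
          _ ≤ M * d := h1
      have h5 : ((μi i) (Ioc 0 δ)).toReal * c < (ε/4) * c := by
        rw [hεc]
        exact lt_of_le_of_lt h2 ((lt_add_iff_pos_right _).2 h4)
      exact lt_of_mul_lt_mul_right h5 hc0.le
    -- bump function facts
    have hμsplit : ∀ i, ((μi i) (Icc 0 δ)).toReal =
        ((μi i) {0}).toReal + ((μi i) (Ioc 0 δ)).toReal := by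
      intro i
      have hun : (Icc (0:ℝ) 0) ∪ Ioc 0 δ = Icc 0 δ := Icc_union_Ioc_eq_Icc le_rfl hδ0.le
      have hdisj : Disjoint (Icc (0:ℝ) 0) (Ioc 0 δ) := by
        apply Set.disjoint_left.2
        intro x hx1 hx2
        rw [mem_Icc] at hx1
        exact absurd hx2.1 (not_lt.2 hx1.2)
      rw [← hun, measure_union hdisj measurableSet_Ioc,
        ENNReal.toReal_add (measure_ne_top _ _) (measure_ne_top _ _), Icc_self]
    have hfc : Continuous (fun x : ℝ => max 0 (1 - x/δ)) :=
      continuous_const.max (continuous_const.sub (continuous_id.div_const δ))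
    have hWf := Metric.tendsto_nhds.1 (hW _ hfc) (ε/4) h4
    filter_upwards [hWf] with i hi
    rw [Real.dist_eq] at hi ⊢
    rw [abs_lt] at hi ⊢
    have hub_i := hbump_ub (μi i) (hsi' i) δ hδ0
    have hlb_i := hbump_lb (μi i) (hsi' i) δ hδ0
    have hub := hbump_ub μ hs' δ hδ0
    have hlb := hbump_lb μ hs' δ hδ0
    have hμδle : (μ (Icc 0 δ)).toReal ≤ (μ (Icc 0 δ₁)).toReal :=
      ENNReal.toReal_mono (measure_ne_top _ _)
        (measure_mono (Icc_subset_Icc le_rfl (min_le_left _ _)))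
    have := hμsplit i
    have := hmass i
    constructor <;> linarith
  -- integrability of log for μ
  -- μ-version of the uniform bound, via weak convergence
  have hWD : ∀ δ : ℝ, 0 < δ → δ ≤ 1 →
      ∫ x in Ioi (0:ℝ), (g 1 x - g δ x) ∂μ ≤ M * d := by
    intro δ hδ0 hδ1
    have hcont : Continuous (fun x => g 1 x - g δ x) := (hgc 1 one_pos).sub (hgc δ hδ0)
    have hval0 : g 1 0 - g δ 0 = -Real.log δ := by
      simp only [hgdef]
      rw [max_eq_right zero_le_one, max_eq_right hδ0.le, Real.log_one]
      ring
    have hle_i : ∀ i, ∫ x, (g 1 x - g δ x) ∂(μi i) ≤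
        (-Real.log δ) * ((μi i) {0}).toReal + M * d := by
      intro i
      rw [split (hsi' i) (integrable_cont (hsi' i) hcont), hval0]
      have hmono : ∫ x in Ioi (0:ℝ), (g 1 x - g δ x) ∂(μi i) ≤
          ∫ x in Ioi (0:ℝ), (g 1 x - Real.log x) ∂(μi i) := by
        apply setIntegral_mono_on (integrable_cont (hsi' i) hcont).integrableOn
          ((hgInt i 1 one_pos).sub (hdeti i).1) measurableSet_Ioi
        intro x hx
        exact sub_le_sub_left (hglog δ x hx) _
      linarith [hA i 1 ⟨one_pos, le_refl 1⟩]
    have hlim1 : Tendsto (fun i => ∫ x, (g 1 x - g δ x) ∂(μi i)) atTop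
        (nhds (∫ x, (g 1 x - g δ x) ∂μ)) := hW _ hcont
    have hlim2 : Tendsto (fun i => (-Real.log δ) * ((μi i) {0}).toReal + M * d) atTop
        (nhds ((-Real.log δ) * (μ {0}).toReal + M * d)) :=
      ((hC.const_mul _).add_const _)
    have hle := le_of_tendsto_of_tendsto' hlim1 hlim2 hle_i
    rw [split hs' (integrable_cont hs' hcont), hval0] at hle
    linarith
  have hgnn : ∀ δ : ℝ, 0 < δ → δ ≤ 1 → ∀ x : ℝ, 0 ≤ g 1 x - g δ x := by
    intro δ hδ0 hδ1 x
    apply sub_nonneg.2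
    apply Real.log_le_log (lt_of_lt_of_le hδ0 (le_max_right x δ))
    exact max_le_max le_rfl hδ1
  have hD : IntegrableOn Real.log (Ioi 0) μ := by
    set φ : ℕ → ℝ → ℝ := fun n x => g 1 x - g (1/(n+1)) x with hφdef
    have hδn : ∀ n : ℕ, (0:ℝ) < 1/((n:ℝ)+1) := fun n => by positivity
    have hδn1 : ∀ n : ℕ, (1:ℝ)/((n:ℝ)+1) ≤ 1 := fun n => by
      rw [div_le_one (by positivity)]
      linarith [Nat.cast_nonneg (α := ℝ) n]
    have hφcont : ∀ n, Continuous (φ n) := fun n => (hgc 1 one_pos).sub (hgc _ (hδn n))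
    have hφmono : Monotone (fun n : ℕ => fun x => ENNReal.ofReal (φ n x)) := by
      intro m n hmn
      intro x
      apply ENNReal.ofReal_le_ofReal
      apply sub_le_sub_left
      apply Real.log_le_log (lt_of_lt_of_le (hδn n) (le_max_right _ _))
      apply max_le_max le_rfl
      apply one_div_le_one_div_of_le (by positivity)
      have : (m:ℝ) ≤ n := Nat.cast_le.2 hmn
      linarith
    have hMCT : ∫⁻ x in Ioi (0:ℝ), ENNReal.ofReal (g 1 x - Real.log x) ∂μ
        ≤ ENNReal.ofReal (M * d) := by
      have hsup : ∀ x ∈ Ioi (0:ℝ), (⨆ n : ℕ, ENNReal.ofReal (φ n x))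
          = ENNReal.ofReal (g 1 x - Real.log x) := by
        intro x hx
        apply le_antisymm
        · apply iSup_le
          intro n
          exact ENNReal.ofReal_le_ofReal (sub_le_sub_left (hglog _ x hx) _)
        · obtain ⟨n, hn⟩ := exists_nat_one_div_lt (mem_Ioi.1 hx)
          have heq : φ n x = g 1 x - Real.log x := by
            simp only [hφdef, hgdef]
            rw [max_eq_left (le_of_lt hn)]
          rw [← heq]
          exact le_iSup (fun n => ENNReal.ofReal (φ n x)) n
      have hcongr : ∫⁻ x in Ioi (0:ℝ), ENNReal.ofReal (g 1 x - Real.log x) ∂μ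
          = ∫⁻ x in Ioi (0:ℝ), (⨆ n, ENNReal.ofReal (φ n x)) ∂μ := by
        apply lintegral_congr_ae
        filter_upwards [ae_restrict_mem measurableSet_Ioi] with x hx
        exact (hsup x hx).symm
      rw [hcongr, lintegral_iSup (fun n => (hφcont n).measurable.ennreal_ofReal)
        (fun m n hmn => hφmono hmn)]
      apply iSup_le
      intro n
      have hint : IntegrableOn (φ n) (Ioi 0) μ := (integrable_cont hs' (hφcont n)).integrableOn
      have hnn : 0 ≤ᵐ[μ.restrict (Ioi 0)] φ n := ae_of_all _ (hgnn _ (hδn n) (hδn1 n))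
      rw [← ofReal_integral_eq_lintegral_ofReal hint hnn]
      exact ENNReal.ofReal_le_ofReal (hWD _ (hδn n) (hδn1 n))
    have hnn' : 0 ≤ᵐ[μ.restrict (Ioi 0)] fun x => g 1 x - Real.log x :=
      (ae_restrict_iff' measurableSet_Ioi).2
        (ae_of_all _ fun x hx => sub_nonneg.2 (hglog 1 x hx))
    have hGL : Integrable (fun x => g 1 x - Real.log x) (μ.restrict (Ioi 0)) := by
      constructor
      · exact ((hgc 1 one_pos).measurable.sub Real.measurable_log).aestronglyMeasurable
      · rw [hasFiniteIntegral_iff_ofReal hnn']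
        exact lt_of_le_of_lt hMCT ENNReal.ofReal_lt_top
    have hres : IntegrableOn (g 1) (Ioi 0) μ :=
      (integrable_cont hs' (hgc 1 one_pos)).integrableOn
    apply (hres.sub hGL).congr
    apply ae_of_all
    intro x
    simp
  -- bounds for the log integrals
  have hbub : ∀ i, ∫ x in Ioi (0:ℝ), Real.log x ∂(μi i) ≤ M * d := by
    intro i
    have h1 : ∫ x in Ioi (0:ℝ), Real.log x ∂(μi i) ≤ ∫ x in Ioi (0:ℝ), g 1 x ∂(μi i) :=
      setIntegral_mono_on (hdeti i).1 (hgInt i 1 one_pos) measurableSet_Ioi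
        (fun x hx => hglog 1 x hx)
    have h2 := setIntegral_le (hsi' i) measurableSet_Ioi (hgInt i 1 one_pos) hM0
      (fun x hx => hgle 1 ⟨one_pos, le_refl 1⟩ x hx.2)
    rw [hdi i] at h2
    linarith
  have hE : 0 ≤ limsup (fun i => ∫ x in Ioi (0 : ℝ), Real.log x ∂(μi i)) atTop :=
    le_limsup_of_frequently_le (Frequently.of_forall fun i => (hdeti i).2)
      ⟨M * d, eventually_map.2 (Eventually.of_forall hbub)⟩
  have hF : limsup (fun i => ∫ x in Ioi (0 : ℝ), Real.log x ∂(μi i)) atTop ≤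
      ∫ x in Ioi (0 : ℝ), Real.log x ∂μ := by
    have hδn : ∀ n : ℕ, (0:ℝ) < 1/((n:ℝ)+1) := fun n => by positivity
    have hδn1 : ∀ n : ℕ, (1:ℝ)/((n:ℝ)+1) ≤ 1 := fun n => by
      rw [div_le_one (by positivity)]
      linarith [Nat.cast_nonneg (α := ℝ) n]
    have key : ∀ n : ℕ, limsup (fun i => ∫ x in Ioi (0 : ℝ), Real.log x ∂(μi i)) atTop ≤
        ∫ x in Ioi (0:ℝ), g (1/(n+1)) x ∂μ := by
      intro n
      set δn : ℝ := 1/((n:ℝ)+1) with hδndef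
      have hδ0 := hδn n
      have hval0 : g δn 0 = Real.log δn := by
        simp only [hgdef]
        rw [max_eq_right hδ0.le]
      set c : ι → ℝ := fun i => ∫ x, g δn x ∂(μi i) - Real.log δn * ((μi i) {0}).toReal
        with hcdef
      have hbc : ∀ i, ∫ x in Ioi (0 : ℝ), Real.log x ∂(μi i) ≤ c i := by
        intro i
        have hsplit := split (hsi' i) (integrable_cont (hsi' i) (hgc δn hδ0))
        rw [hval0] at hsplit
        have h1 : ∫ x in Ioi (0:ℝ), Real.log x ∂(μi i) ≤ ∫ x in Ioi (0:ℝ), g δn x ∂(μi i) :=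
          setIntegral_mono_on (hdeti i).1 (hgInt i δn hδ0) measurableSet_Ioi
            (fun x hx => hglog δn x hx)
        rw [hcdef]
        simp only
        linarith
      have hctend : Tendsto c atTop
          (nhds (∫ x, g δn x ∂μ - Real.log δn * (μ {0}).toReal)) :=
        (hW _ (hgc δn hδ0)).sub (hC.const_mul _)
      have hlim : limsup (fun i => ∫ x in Ioi (0 : ℝ), Real.log x ∂(μi i)) atTop ≤
          limsup c atTop := by
        exact limsup_le_limsup (Eventually.of_forall hbc)
          (isCoboundedUnder_le_of_le atTop (fun i => (hdeti i).2))
          hctend.isBoundedUnder_le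
      rw [hctend.limsup_eq] at hlim
      have hsplitμ := split hs' (integrable_cont hs' (hgc δn hδ0))
      rw [hval0] at hsplitμ
      linarith
    have hDCT : Tendsto (fun n : ℕ => ∫ x in Ioi (0:ℝ), g (1/(n+1)) x ∂μ) atTop
        (nhds (∫ x in Ioi (0:ℝ), Real.log x ∂μ)) := by
      apply tendsto_integral_of_dominated_convergence (fun x => |Real.log x| + M)
      · exact fun n => (hgc _ (hδn n)).aestronglyMeasurable
      · exact hD.abs.add (integrableOn_const (measure_ne_top _ _))
      · intro n
        filter_upwards [ae_restrict_mem measurableSet_Ioi] with x hx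
        rw [Real.norm_eq_abs]
        rcases le_or_gt (1/((n:ℝ)+1)) x with h|h
        · have : g (1/((n:ℝ)+1)) x = Real.log x := by
            simp only [hgdef]
            rw [max_eq_left h]
          rw [this]
          linarith [abs_nonneg (Real.log x)]
        · have hgx : g (1/((n:ℝ)+1)) x = Real.log (1/((n:ℝ)+1)) := by
            simp only [hgdef]
            rw [max_eq_right h.le]
          have h1 : Real.log x ≤ Real.log (1/((n:ℝ)+1)) := Real.log_le_log hx h.le
          have h2 : Real.log (1/((n:ℝ)+1)) ≤ 0 :=
            Real.log_nonpos (by positivity) (hδn1 n)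
          rw [hgx, abs_of_nonpos h2]
          have h3 : |Real.log x| = -Real.log x := abs_of_nonpos (by linarith)
          rw [h3] at *
          linarith
      · filter_upwards [ae_restrict_mem measurableSet_Ioi] with x hx
        obtain ⟨N, hN⟩ := exists_nat_one_div_lt (mem_Ioi.1 hx)
        apply Tendsto.congr' _ tendsto_const_nhds
        rw [Filter.EventuallyEq, eventually_atTop]
        refine ⟨N, fun n hn => ?_⟩
        have hle : (1:ℝ)/((n:ℝ)+1) ≤ 1/((N:ℝ)+1) := by
          apply one_div_le_one_div_of_le (by positivity)
          have : (N:ℝ) ≤ n := Nat.cast_le.2 hn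
          linarith
        simp only [hgdef]
        rw [max_eq_left (le_of_lt (lt_of_le_of_lt hle hN))]
    exact ge_of_tendsto hDCT (Eventually.of_forall key)
  refine ⟨?_, hD, hE, hF⟩
  simpa [sdf, Set.Icc_self] using hC
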